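/- Let M be a module over C_n ⋊ ℂS_n. Then the following operators on ℂ[y_1,…,y_n] ⊗ M define a representation of H^c_{A_{n−1}}(u) (namely the induced module from the subalgebra generated by C_n ⋊ ℂS_n and x_1,…,x_n, with each x_i acting on M by zero): each y_i acts by multiplication by y_i in the first factor; w ∈ S_n acts by w·(f ⊗ m) = f^w ⊗ wm; c_i acts by c_i·(f ⊗ m) = f ⊗ c_i m; and x_i acts by the Dunkl operator x_i·(f ⊗ m) = u·Σ_{k≠i} g_k ⊗ (1 + c_k c_i)s_{ki} m, where g_k ∈ ℂ[y_1,…,y_n] is the unique polynomial with (y_i − y_k)·g_k = f − f^{s_{ki}}, and f^{s_{ki}} is f with y_i and y_k interchanged. -/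

import Mathlib

noncomputable section

abbrev SignFn (n : ℕ) := Fin n → ℤˣ

/-- The permutation action on sign functions. -/
def permAut (n : ℕ) : Equiv.Perm (Fin n) →* MulAut (SignFn n) where
  toFun σ :=
    { toFun := fun f => f ∘ σ.symm
      invFun := fun f => f ∘ σ
      left_inv := fun f => by ext k; simp
      right_inv := fun f => by ext k; simp
      map_mul' := fun f g => rfl }
  map_one' := by ext f k; rfl
  map_mul' := fun σ τ => by
    ext f k
    show (f ((σ * τ).symm k) : ℤ) = f (τ.symm (σ.symm k))
    rw [Equiv.Perm.mul_def, Equiv.symm_trans_apply]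

/-- The hyperoctahedral group `W_{B_n}` of signed permutations, as a semidirect product. -/
abbrev WB (n : ℕ) := SignFn n ⋊[permAut n] Equiv.Perm (Fin n)

/-- the transposition `s_{ij}` in `W_{B_n}`. -/
def sB {n : ℕ} (i j : Fin n) : WB n := ⟨1, Equiv.swap i j⟩

/-- the transposition with sign changes `s̄_{ij}` in `W_{B_n}`. -/
def sbarB {n : ℕ} (i j : Fin n) : WB n :=
  ⟨fun k => if k = i ∨ k = j then -1 else 1, Equiv.swap i j⟩

/-- the sign change `τ_i` at `i` in `W_{B_n}`. -/
def tauB {n : ℕ} (i : Fin n) : WB n := ⟨fun k => if k = i then -1 else 1, 1⟩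

/-- The signed-permutation action of `w ∈ W_{B_n}` on a basis vector `e_i`:
`w(e_i) = (sign) • e_{(index)}`; we record the pair (sign, index). -/
def actB {n : ℕ} (w : WB n) (i : Fin n) : ℂ × Fin n :=
  (((w.left (w.right i) : ℤ) : ℂ), w.right i)

/-- `W_{D_n}` as the subgroup of even signed permutations inside `W_{B_n}`. -/
def WDsub (n : ℕ) : Subgroup (WB n) where
  carrier := {w | ∏ k, w.left k = 1}
  one_mem' := by simp
  mul_mem' := by
    intro a b ha hb
    simp only [Set.mem_setOf_eq] at *
    have h1 : (a * b).left = a.left * (permAut n a.right) b.left := rfl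
    rw [h1]
    rw [show (∏ k, (a.left * (permAut n a.right) b.left) k) = (∏ k, a.left k) * ∏ k, (permAut n a.right) b.left k from Finset.prod_mul_distrib, ha, one_mul]
    calc ∏ k, (permAut n a.right) b.left k = ∏ k, b.left (a.right.symm k) := rfl
      _ = ∏ k, b.left k := Equiv.prod_comp a.right.symm b.left
      _ = 1 := hb
  inv_mem' := by
    intro a ha
    simp only [Set.mem_setOf_eq] at *
    have h1 : (a⁻¹).left = (permAut n a.right⁻¹) a.left⁻¹ := rfl
    rw [h1]
    calc ∏ k, (permAut n a.right⁻¹) a.left⁻¹ k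
        = ∏ k, a.left⁻¹ ((a.right⁻¹).symm k) := rfl
      _ = ∏ k, (a.left k)⁻¹ := Equiv.prod_comp _ _
      _ = (∏ k, a.left k)⁻¹ := by rw [← Finset.prod_inv_distrib]
      _ = 1 := by rw [ha]; simp

lemma sB_mem {n : ℕ} (i j : Fin n) : sB i j ∈ WDsub n := by
  simp [WDsub, sB]

lemma sbarB_mem {n : ℕ} {i j : Fin n} (h : i ≠ j) : sbarB i j ∈ WDsub n := by
  show ∏ k, (if k = i ∨ k = j then (-1 : ℤˣ) else 1) = 1
  have step : ∀ k, (if k = i ∨ k = j then (-1 : ℤˣ) else 1)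
      = (if k = i then -1 else 1) * (if k = j then -1 else 1) := by
    intro k
    by_cases h1 : k = i <;> by_cases h2 : k = j <;> simp_all
  simp_rw [step, Finset.prod_mul_distrib, Finset.prod_ite_eq', Finset.mem_univ, if_true]
  norm_num

/-- the transposition `s_{ij}` as an element of `W_{D_n}`. -/
def sD {n : ℕ} (i j : Fin n) : WDsub n := ⟨sB i j, sB_mem i j⟩

/-- the transposition with sign changes `s̄_{ij}` as an element of `W_{D_n}` (junk value `1`
when `i = j`). -/
def sbarD {n : ℕ} (i j : Fin n) : WDsub n :=
  if h : i = j then 1 else ⟨sbarB i j, sbarB_mem h⟩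

/-- The signed-permutation action for `W_{D_n}`. -/
def actD {n : ℕ} (w : WDsub n) (i : Fin n) : ℂ × Fin n := actB w.1 i

/-- The (trivially signed) permutation action of `S_n`. -/
def actA (n : ℕ) (σ : Equiv.Perm (Fin n)) (i : Fin n) : ℂ × Fin n := (1, σ i)

/-- Generators of a rational double affine Hecke-Clifford algebra:
`x_i`, `y_i`, Clifford generators `c_i`, and group elements `w ∈ W`. -/
inductive HGen (n : ℕ) (G : Type) : Type
  | x : Fin n → HGen n G
  | y : Fin n → HGen n G
  | c : Fin n → HGen n G
  | g : G → HGen n G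

/-- The free algebra on the generators. -/
abbrev HF (n : ℕ) (G : Type) := FreeAlgebra ℂ (HGen n G)

def hX {n : ℕ} {G : Type} (i : Fin n) : HF n G := FreeAlgebra.ι ℂ (HGen.x i)
def hY {n : ℕ} {G : Type} (i : Fin n) : HF n G := FreeAlgebra.ι ℂ (HGen.y i)
def hC {n : ℕ} {G : Type} (i : Fin n) : HF n G := FreeAlgebra.ι ℂ (HGen.c i)
def hG {n : ℕ} {G : Type} (w : G) : HF n G := FreeAlgebra.ι ℂ (HGen.g w)

/-- The defining relations of a rational double affine Hecke-Clifford algebra, where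
`act w i = (sign, index)` records the (signed) permutation action `w(e_i) = sign • e_index`
of the group `W` on the basis vectors, and `R j i` is the prescribed value of the
commutator `[y_j, x_i]`. -/
inductive HRel (n : ℕ) (G : Type) [Group G] (act : G → Fin n → ℂ × Fin n)
    (R : Fin n → Fin n → HF n G) : HF n G → HF n G → Prop
  | cc (i : Fin n) : HRel n G act R (hC i * hC i) 1
  | canti {i j : Fin n} (h : i ≠ j) : HRel n G act R (hC i * hC j) (-(hC j * hC i))
  | xx (i j : Fin n) : HRel n G act R (hX i * hX j) (hX j * hX i)
  | yy (i j : Fin n) : HRel n G act R (hY i * hY j) (hY j * hY i)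
  | yc (i j : Fin n) : HRel n G act R (hY i * hC j) (hC j * hY i)
  | xcs (i : Fin n) : HRel n G act R (hX i * hC i) (-(hC i * hX i))
  | xc {i j : Fin n} (h : i ≠ j) : HRel n G act R (hX i * hC j) (hC j * hX i)
  | gone : HRel n G act R (hG (1 : G)) 1
  | gmul (w w' : G) : HRel n G act R (hG w * hG w') (hG (w * w'))
  | gx (w : G) (i : Fin n) :
      HRel n G act R (hG w * hX i) ((act w i).1 • (hX (act w i).2 * hG w))
  | gy (w : G) (i : Fin n) :
      HRel n G act R (hG w * hY i) ((act w i).1 • (hY (act w i).2 * hG w))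
  | gc (w : G) (i : Fin n) :
      HRel n G act R (hG w * hC i) ((act w i).1 • (hC (act w i).2 * hG w))
  | yx (j i : Fin n) : HRel n G act R (hY j * hX i) (hX i * hY j + R j i)

/-- A rational double affine Hecke-Clifford algebra, presented by generators and relations. -/
abbrev DaHCa (n : ℕ) (G : Type) [Group G] (act : G → Fin n → ℂ × Fin n)
    (R : Fin n → Fin n → HF n G) := RingQuot (HRel n G act R)

variable {n : ℕ} {G : Type} [Group G] {act : G → Fin n → ℂ × Fin n}
  {R : Fin n → Fin n → HF n G}

def dX (act : G → Fin n → ℂ × Fin n) (R : Fin n → Fin n → HF n G) (i : Fin n) :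
    DaHCa n G act R := RingQuot.mkAlgHom ℂ (HRel n G act R) (hX i)
def dY (act : G → Fin n → ℂ × Fin n) (R : Fin n → Fin n → HF n G) (i : Fin n) :
    DaHCa n G act R := RingQuot.mkAlgHom ℂ (HRel n G act R) (hY i)
def dC (act : G → Fin n → ℂ × Fin n) (R : Fin n → Fin n → HF n G) (i : Fin n) :
    DaHCa n G act R := RingQuot.mkAlgHom ℂ (HRel n G act R) (hC i)
def dG (act : G → Fin n → ℂ × Fin n) (R : Fin n → Fin n → HF n G) (w : G) :
    DaHCa n G act R := RingQuot.mkAlgHom ℂ (HRel n G act R) (hG w)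

/-- The right-hand side of the commutation relations `[y_j, x_i]` in the rational
DaHCa of type `A_{n-1}`:  `[y_j,x_i] = u(1+c_j c_i)s_{ji}` for `i ≠ j` and
`[y_i,x_i] = -u Σ_{k≠i} (1+c_k c_i)s_{ki}`. -/
def RA (n : ℕ) (u : ℂ) (j i : Fin n) : HF n (Equiv.Perm (Fin n)) :=
  if j = i then
    -(u • ∑ k ∈ Finset.univ.erase i, (1 + hC k * hC i) * hG (Equiv.swap k i))
  else
    u • ((1 + hC j * hC i) * hG (Equiv.swap j i))

/-- The rational double affine Hecke-Clifford algebra of type `A_{n-1}`. -/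
abbrev HCA (n : ℕ) (u : ℂ) := DaHCa n (Equiv.Perm (Fin n)) (actA n) (RA n u)

def xA {n : ℕ} {u : ℂ} (i : Fin n) : HCA n u := dX (actA n) (RA n u) i
def yA {n : ℕ} {u : ℂ} (i : Fin n) : HCA n u := dY (actA n) (RA n u) i
def cA {n : ℕ} {u : ℂ} (i : Fin n) : HCA n u := dC (actA n) (RA n u) i
def gA {n : ℕ} {u : ℂ} (w : Equiv.Perm (Fin n)) : HCA n u := dG (actA n) (RA n u) w

/-- Generators of the smash product `C_n ⋊ ℂW`: Clifford generators `c_i` and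
group elements `w ∈ W`. -/
inductive KGen (n : ℕ) (G : Type) : Type
  | c : Fin n → KGen n G
  | g : G → KGen n G

abbrev KF (n : ℕ) (G : Type) := FreeAlgebra ℂ (KGen n G)

def kfC {n : ℕ} {G : Type} (i : Fin n) : KF n G := FreeAlgebra.ι ℂ (KGen.c i)
def kfG {n : ℕ} {G : Type} (w : G) : KF n G := FreeAlgebra.ι ℂ (KGen.g w)

/-- The defining relations of the smash product `C_n ⋊ ℂW`: the Clifford relations,
the group algebra relations, and `w c_i w^{-1} = w(c_i)` where `w(c_i)` is given by the
(signed) permutation action `act`. -/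
inductive KRel (n : ℕ) (G : Type) [Group G] (act : G → Fin n → ℂ × Fin n) :
    KF n G → KF n G → Prop
  | cc (i : Fin n) : KRel n G act (kfC i * kfC i) 1
  | canti {i j : Fin n} (h : i ≠ j) : KRel n G act (kfC i * kfC j) (-(kfC j * kfC i))
  | gone : KRel n G act (kfG (1 : G)) 1
  | gmul (w w' : G) : KRel n G act (kfG w * kfG w') (kfG (w * w'))
  | gc (w : G) (i : Fin n) :
      KRel n G act (kfG w * kfC i) ((act w i).1 • (kfC (act w i).2 * kfG w))

/-- The smash product `C_n ⋊ ℂW`, presented by generators and relations. -/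
abbrev Smash (n : ℕ) (G : Type) [Group G] (act : G → Fin n → ℂ × Fin n) :=
  RingQuot (KRel n G act)

def kC {n : ℕ} {G : Type} [Group G] (act : G → Fin n → ℂ × Fin n) (i : Fin n) :
    Smash n G act := RingQuot.mkAlgHom ℂ (KRel n G act) (kfC i)
def kG {n : ℕ} {G : Type} [Group G] (act : G → Fin n → ℂ × Fin n) (w : G) :
    Smash n G act := RingQuot.mkAlgHom ℂ (KRel n G act) (kfG w)

open scoped TensorProduct
set_option linter.unusedVariables false
set_option linter.unusedSectionVars false
namespace DunklAux
open MvPolynomial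

variable {n : ℕ}

abbrev P (n : ℕ) := MvPolynomial (Fin n) ℂ

lemma X_sub_X_ne_zero {i k : Fin n} (h : k ≠ i) : (X i - X k : P n) ≠ 0 := by
  intro hc
  exact h (MvPolynomial.X_injective (sub_eq_zero.mp hc)).symm

lemma dvd_sub_rename (i k : Fin n) (f : P n) :
    (X i - X k : P n) ∣ (f - rename (Equiv.swap k i) f) := by
  induction f using MvPolynomial.induction_on with
  | C a => simp
  | add p q hp hq =>
    rw [map_add, show p + q - ((rename (⇑(Equiv.swap k i))) p + (rename (⇑(Equiv.swap k i))) q)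
      = (p - rename (⇑(Equiv.swap k i)) p) + (q - rename (⇑(Equiv.swap k i)) q) by ring]
    exact dvd_add hp hq
  | mul_X p j hp =>
    rw [map_mul, rename_X]
    have key : p * X j - rename (⇑(Equiv.swap k i)) p * X (Equiv.swap k i j)
        = (p - rename (⇑(Equiv.swap k i)) p) * X j
          + rename (⇑(Equiv.swap k i)) p * (X j - X (Equiv.swap k i j)) := by ring
    rw [key]
    refine dvd_add (hp.mul_right _) (Dvd.dvd.mul_left ?_ _)
    rcases eq_or_ne j k with rfl | hjk
    · rw [Equiv.swap_apply_left]
      exact ⟨-1, by ring⟩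
    rcases eq_or_ne j i with rfl | hji
    · rw [Equiv.swap_apply_right]
    · rw [Equiv.swap_apply_of_ne_of_ne hjk hji, sub_self]
      exact dvd_zero _

lemma existsUnique_delta (f : P n) (i k : Fin n) (h : k ≠ i) :
    ∃! g : P n, (X i - X k) * g = f - rename (Equiv.swap k i) f := by
  obtain ⟨g, hg⟩ := dvd_sub_rename i k f
  refine ⟨g, hg.symm, fun g' hg' => ?_⟩
  exact mul_left_cancel₀ (X_sub_X_ne_zero h) (hg'.trans hg)

/-- The divided-difference (Demazure-type) operator; junk `0` for `k = i`. -/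
def delta (k i : Fin n) (f : P n) : P n :=
  if h : k = i then 0 else (existsUnique_delta f i k h).exists.choose

lemma delta_spec {k i : Fin n} (h : k ≠ i) (f : P n) :
    (X i - X k) * delta k i f = f - rename (Equiv.swap k i) f := by
  rw [delta, dif_neg h]
  exact (existsUnique_delta f i k h).exists.choose_spec

lemma delta_eq {k i : Fin n} (h : k ≠ i) {f g : P n}
    (hg : (X i - X k) * g = f - rename (Equiv.swap k i) f) : g = delta k i f :=
  mul_left_cancel₀ (X_sub_X_ne_zero h) (hg.trans (delta_spec h f).symm)

lemma delta_self (i : Fin n) (f : P n) : delta i i f = 0 := by rw [delta, dif_pos rfl]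

lemma delta_add (k i : Fin n) (f g : P n) :
    delta k i (f + g) = delta k i f + delta k i g := by
  rcases eq_or_ne k i with rfl | h
  · simp [delta_self]
  · refine (delta_eq h ?_).symm
    rw [mul_add, delta_spec h, delta_spec h, map_add]; ring

lemma delta_smul (k i : Fin n) (a : ℂ) (f : P n) :
    delta k i (a • f) = a • delta k i f := by
  rcases eq_or_ne k i with rfl | h
  · simp [delta_self]
  · refine (delta_eq h ?_).symm
    rw [map_smul, ← smul_sub, ← delta_spec h f, mul_smul_comm]

def deltaL (k i : Fin n) : P n →ₗ[ℂ] P n where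
  toFun := delta k i
  map_add' := delta_add k i
  map_smul' := delta_smul k i

@[simp] lemma deltaL_apply (k i : Fin n) (f : P n) : deltaL k i f = delta k i f := rfl

lemma delta_C (k i : Fin n) (a : ℂ) : delta k i (C a) = 0 := by
  rcases eq_or_ne k i with rfl | h
  · exact delta_self _ _
  · refine (delta_eq h ?_).symm; simp

lemma delta_rename {k i : Fin n} (h : k ≠ i) (w : Equiv.Perm (Fin n)) (f : P n) :
    rename w (delta k i f) = delta (w k) (w i) (rename w f) := by
  have hwk : w k ≠ w i := fun hc => h (w.injective hc)
  refine delta_eq hwk ?_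
  have : (X (w i) - X (w k) : P n) = rename w (X i - X k) := by simp
  rw [this, ← map_mul, delta_spec h, map_sub, rename_rename, rename_rename]
  have hfun : (⇑w ∘ ⇑(Equiv.swap k i)) = (⇑(Equiv.swap (w k) (w i)) ∘ ⇑w) := by
    funext x
    show w (Equiv.swap k i x) = Equiv.swap (w k) (w i) (w x)
    rw [Equiv.swap_apply_apply]
    simp [Equiv.Perm.mul_apply]
  rw [hfun]

lemma delta_X_mul_of_ne {k i j : Fin n} (h : k ≠ i) (hjk : j ≠ k) (hji : j ≠ i) (f : P n) :
    delta k i (X j * f) = X j * delta k i f := by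
  refine (delta_eq h ?_).symm
  have : rename (Equiv.swap k i) (X j * f) = X j * rename (Equiv.swap k i) f := by
    rw [map_mul, rename_X, Equiv.swap_apply_of_ne_of_ne hjk hji]
  rw [this, ← mul_assoc, mul_comm (X i - X k) (X j), mul_assoc, delta_spec h, mul_sub]

lemma delta_X_mul_i {k i : Fin n} (h : k ≠ i) (f : P n) :
    delta k i (X i * f) = X i * delta k i f + rename (Equiv.swap k i) f := by
  refine (delta_eq h ?_).symm
  have : rename (Equiv.swap k i) (X i * f) = X k * rename (Equiv.swap k i) f := by
    rw [map_mul, rename_X, Equiv.swap_apply_right]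
  rw [this, mul_add]
  rw [show (X i - X k : P n) * (X i * delta k i f) = X i * ((X i - X k) * delta k i f) by ring,
    delta_spec h]
  ring

lemma delta_X_mul_k {k i : Fin n} (h : k ≠ i) (f : P n) :
    delta k i (X k * f) = X k * delta k i f - rename (Equiv.swap k i) f := by
  refine (delta_eq h ?_).symm
  have : rename (Equiv.swap k i) (X k * f) = X i * rename (Equiv.swap k i) f := by
    rw [map_mul, rename_X, Equiv.swap_apply_left]
  rw [this, mul_sub]
  rw [show (X i - X k : P n) * (X k * delta k i f) = X k * ((X i - X k) * delta k i f) by ring,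
    delta_spec h]
  ring

end DunklAux
set_option linter.unusedVariables false
set_option linter.unusedSectionVars false
namespace DunklAux
open MvPolynomial

variable {n : ℕ}

abbrev K (n : ℕ) := Smash n (Equiv.Perm (Fin n)) (actA n)

def c (i : Fin n) : K n := kC (actA n) i
def g (w : Equiv.Perm (Fin n)) : K n := kG (actA n) w

-- instance-matching helpers for `RingQuot`
lemma kmul_neg (a b : K n) : a * -b = -(a * b) := mul_neg a b
lemma kneg_mul (a b : K n) : -a * b = -(a * b) := neg_mul a b
lemma kneg_neg (a : K n) : - -a = a := neg_neg a
lemma kneg_sub (a b : K n) : -(a - b) = b - a := neg_sub a b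
lemma ksub_mul (a b c : K n) : (a - b) * c = a * c - b * c := sub_mul a b c
lemma kmul_sub (a b c : K n) : a * (b - c) = a * b - a * c := mul_sub a b c
lemma ksub_eq (a b : K n) : a - b = a + -b := sub_eq_add_neg a b
lemma kadd_neg (a : K n) : a + -a = 0 := add_neg_cancel a

lemma c_sq (i : Fin n) : (c i : K n) * c i = 1 := by
  have := RingQuot.mkAlgHom_rel ℂ (KRel.cc (n := n) (G := Equiv.Perm (Fin n))
    (act := actA n) i)
  simpa [c, kC, map_mul, map_one] using this

lemma c_anti {i j : Fin n} (h : i ≠ j) : (c i : K n) * c j = -(c j * c i) := by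
  have := RingQuot.mkAlgHom_rel ℂ (KRel.canti (n := n) (G := Equiv.Perm (Fin n))
    (act := actA n) h)
  simpa [c, kC, map_mul, map_neg] using this

lemma g_one : (g 1 : K n) = 1 := by
  have := RingQuot.mkAlgHom_rel ℂ (KRel.gone (n := n) (G := Equiv.Perm (Fin n))
    (act := actA n))
  simpa [g, kG, map_one] using this

lemma g_mul (w w' : Equiv.Perm (Fin n)) : (g w : K n) * g w' = g (w * w') := by
  have := RingQuot.mkAlgHom_rel ℂ (KRel.gmul (n := n) (G := Equiv.Perm (Fin n))
    (act := actA n) w w')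
  simpa [g, kG, map_mul] using this

lemma g_c (w : Equiv.Perm (Fin n)) (i : Fin n) : (g w : K n) * c i = c (w i) * g w := by
  have := RingQuot.mkAlgHom_rel ℂ (KRel.gc (n := n) (G := Equiv.Perm (Fin n))
    (act := actA n) w i)
  simpa [g, c, kG, kC, map_mul, map_smul, actA] using this

/-- The element `(1 + c_k c_i) s_{ki}` of the smash product. -/
def tk (k i : Fin n) : K n := (1 + c k * c i) * g (Equiv.swap k i)

lemma g_swap_c_i (k i : Fin n) : (g (Equiv.swap k i) : K n) * c i = c k * g (Equiv.swap k i) := by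
  rw [g_c, Equiv.swap_apply_right]

lemma g_swap_c_k (k i : Fin n) : (g (Equiv.swap k i) : K n) * c k = c i * g (Equiv.swap k i) := by
  rw [g_c, Equiv.swap_apply_left]

lemma g_swap_c_other {k i j : Fin n} (hk : j ≠ k) (hi : j ≠ i) :
    (g (Equiv.swap k i) : K n) * c j = c j * g (Equiv.swap k i) := by
  rw [g_c, Equiv.swap_apply_of_ne_of_ne hk hi]

lemma cki_ck {k i : Fin n} (h : k ≠ i) : ((c k : K n) * c i) * c k = -c i := by
  rw [mul_assoc, c_anti (Ne.symm h), kmul_neg, ← mul_assoc, c_sq, one_mul]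

lemma cki_ci {k i : Fin n} (h : k ≠ i) : ((c k : K n) * c i) * c i = c k := by
  rw [mul_assoc, c_sq, mul_one]

lemma ck_cki {k i : Fin n} (h : k ≠ i) : (c k : K n) * (c k * c i) = c i := by
  rw [← mul_assoc, c_sq, one_mul]

lemma ci_cki {k i : Fin n} (h : k ≠ i) : (c i : K n) * (c k * c i) = -c k := by
  rw [← mul_assoc, c_anti (Ne.symm h), kneg_mul, mul_assoc, c_sq, mul_one]

/-- `T_{ki} c_i = - c_i T_{ki}` for `k ≠ i`. -/
lemma tk_c_i {k i : Fin n} (h : k ≠ i) : (tk k i : K n) * c i = -(c i * tk k i) := by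
  have lhs : (tk k i : K n) * c i = (c k - c i) * g (Equiv.swap k i) := by
    rw [tk, mul_assoc, g_swap_c_i, ← mul_assoc, add_mul, one_mul, cki_ck h, ksub_eq]
  have rhs : (c i : K n) * tk k i = (c i - c k) * g (Equiv.swap k i) := by
    rw [tk, ← mul_assoc, mul_add, mul_one, ci_cki h, ksub_eq]
  rw [lhs, rhs, ← kneg_sub, kneg_mul]

/-- `T_{ki} c_k = c_k T_{ki}` for `k ≠ i`. -/
lemma tk_c_k {k i : Fin n} (h : k ≠ i) : (tk k i : K n) * c k = c k * tk k i := by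
  have lhs : (tk k i : K n) * c k = (c i + c k) * g (Equiv.swap k i) := by
    rw [tk, mul_assoc, g_swap_c_k, ← mul_assoc, add_mul, one_mul, cki_ci h, add_comm]
  have rhs : (c k : K n) * tk k i = (c k + c i) * g (Equiv.swap k i) := by
    rw [tk, ← mul_assoc, mul_add, mul_one, ck_cki h]
  rw [lhs, rhs, add_comm]

lemma tk_c_other {k i j : Fin n} (hk : j ≠ k) (hi : j ≠ i) :
    (tk k i : K n) * c j = c j * tk k i := by
  have hcc : ((c k : K n) * c i) * c j = c j * (c k * c i) := by
    rw [mul_assoc, c_anti (Ne.symm hi), kmul_neg, ← mul_assoc, c_anti (Ne.symm hk), kneg_mul,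
      kneg_neg, mul_assoc]
  rw [tk, mul_assoc, g_swap_c_other hk hi, ← mul_assoc, add_mul, one_mul, hcc]
  conv_rhs => rw [← mul_assoc, mul_add, mul_one]

lemma g_tk (w : Equiv.Perm (Fin n)) (k i : Fin n) :
    (g w : K n) * tk k i = tk (w k) (w i) * g w := by
  have hswap : Equiv.swap (w k) (w i) * w = w * Equiv.swap k i := by
    rw [Equiv.swap_apply_apply]; group
  have L : (g w : K n) * tk k i = g (w * Equiv.swap k i)
      + (c (w k) * c (w i)) * g (w * Equiv.swap k i) := by
    rw [tk, ← mul_assoc, mul_add, mul_one, ← mul_assoc, g_c, mul_assoc (c (w k)), g_c,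
      ← mul_assoc (c (w k)) (c (w i)), add_mul, mul_assoc (c (w k) * c (w i)), g_mul]
  have R : (tk (w k) (w i) : K n) * g w = g (Equiv.swap (w k) (w i) * w)
      + (c (w k) * c (w i)) * g (Equiv.swap (w k) (w i) * w) := by
    rw [tk, add_mul, one_mul, add_mul, mul_assoc, g_mul]
  rw [L, R, hswap]

end DunklAux
namespace DunklAux
open MvPolynomial
open scoped TensorProduct

section Operators
set_option linter.unusedSectionVars false

variable {n : ℕ} (u : ℂ) {M : Type} [AddCommGroup M] [Module ℂ M]
  [Module (K n) M] [IsScalarTower ℂ (K n) M]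

/-- The action of an element of the smash product as a `ℂ`-linear endomorphism. -/
def actL (a : K n) : M →ₗ[ℂ] M where
  toFun m := a • m
  map_add' := smul_add a
  map_smul' r m := by
    simp only [RingHom.id_apply]
    have h0 : a * (r • (1 : K n)) = r • a := by rw [mul_smul_comm, mul_one]
    calc a • (r • m) = a • ((r • (1 : K n)) • m) := by rw [smul_assoc, one_smul]
      _ = (a * (r • (1 : K n))) • m := (mul_smul _ _ _).symm
      _ = (r • a) • m := by rw [h0]
      _ = r • (a • m) := smul_assoc r a m

@[simp] lemma actL_apply (a : K n) (m : M) : actL a m = a • m := rfl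

lemma kneg_smul (a : K n) (m : M) : (-a) • m = -(a • m) := neg_smul a m
lemma kmul_smul (a b : K n) (m : M) : (a * b) • m = a • (b • m) := mul_smul a b m
lemma ksub_smul (a b : K n) (m : M) : (a - b) • m = a • m - b • m := sub_smul a b m
lemma kadd_smul (a b : K n) (m : M) : (a + b) • m = a • m + b • m := add_smul a b m
lemma kone_smul (m : M) : (1 : K n) • m = m := one_smul _ m

lemma kneg_mul_smul (a b : K n) (m : M) : (-(a * b)) • m = -((a * b) • m) := neg_smul _ m

abbrev EE (n : ℕ) (M : Type) [AddCommGroup M] [Module ℂ M] : Type :=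
  Module.End ℂ (P n ⊗[ℂ] M)

def mulX (i : Fin n) : P n →ₗ[ℂ] P n := LinearMap.mulLeft ℂ (X i)

def oY (i : Fin n) : EE n M := TensorProduct.map (mulX i) LinearMap.id
def oC (i : Fin n) : EE n M := TensorProduct.map LinearMap.id (actL (c i))
def oG (w : Equiv.Perm (Fin n)) : EE n M :=
  TensorProduct.map ((rename (⇑w) : P n →ₐ[ℂ] P n) : P n →ₗ[ℂ] P n) (actL (g w))
def oT (k i : Fin n) : EE n M := TensorProduct.map (deltaL k i) (actL (tk k i))
def oX (i : Fin n) : EE n M := u • ∑ k : Fin n, oT k i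
def oS (k i : Fin n) : EE n M := (1 + oC k * oC i) * oG (Equiv.swap k i)

@[simp] lemma oY_tmul (i : Fin n) (f : P n) (m : M) :
    (oY i : EE n M) (f ⊗ₜ[ℂ] m) = (X i * f) ⊗ₜ[ℂ] m := rfl

@[simp] lemma oC_tmul (i : Fin n) (f : P n) (m : M) :
    (oC i : EE n M) (f ⊗ₜ[ℂ] m) = f ⊗ₜ[ℂ] (c i • m) := rfl

@[simp] lemma oG_tmul (w : Equiv.Perm (Fin n)) (f : P n) (m : M) :
    (oG w : EE n M) (f ⊗ₜ[ℂ] m) = (rename (⇑w) f) ⊗ₜ[ℂ] (g w • m) := rfl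

@[simp] lemma oT_tmul (k i : Fin n) (f : P n) (m : M) :
    (oT k i : EE n M) (f ⊗ₜ[ℂ] m) = (delta k i f) ⊗ₜ[ℂ] (tk k i • m) := rfl

lemma oX_tmul (i : Fin n) (f : P n) (m : M) :
    (oX u i : EE n M) (f ⊗ₜ[ℂ] m)
      = u • ∑ k : Fin n, (delta k i f) ⊗ₜ[ℂ] (tk k i • m) := by
  simp [oX, LinearMap.sum_apply]

lemma oS_tmul (k i : Fin n) (f : P n) (m : M) :
    (oS k i : EE n M) (f ⊗ₜ[ℂ] m)
      = (rename (⇑(Equiv.swap k i)) f) ⊗ₜ[ℂ] (tk k i • m) := by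
  simp only [oS, Module.End.mul_apply, LinearMap.add_apply, Module.End.one_apply, oG_tmul,
    oC_tmul, tk, kmul_smul, kadd_smul, kone_smul]
  rw [TensorProduct.tmul_add]

lemma eneg_neg (a : EE n M) : - -a = a := neg_neg a
lemma eneg_mul (a b : EE n M) : -a * b = -(a * b) := by
  ext x; simp [Module.End.mul_apply]
lemma emul_neg (a b : EE n M) : a * -b = -(a * b) := by
  ext x; simp [Module.End.mul_apply]
lemma emul_sub (a b c : EE n M) : a * (b - c) = a * b - a * c := mul_sub a b c
lemma esub_mul (a b c : EE n M) : (a - b) * c = a * c - b * c := sub_mul a b c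

-- E1
lemma oC_sq (i : Fin n) : (oC i : EE n M) * oC i = 1 := by
  refine TensorProduct.ext' fun f m => ?_
  simp [Module.End.mul_apply, ← kmul_smul, c_sq, kone_smul]

-- E2
lemma oC_anti {i j : Fin n} (h : i ≠ j) : (oC i : EE n M) * oC j = -(oC j * oC i) := by
  refine TensorProduct.ext' fun f m => ?_
  simp only [Module.End.mul_apply, LinearMap.neg_apply, oC_tmul, ← kmul_smul, c_anti h,
    kneg_smul, TensorProduct.tmul_neg]

-- E3
lemma oG_one : (oG 1 : EE n M) = 1 := by
  refine TensorProduct.ext' fun f m => ?_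
  have : ⇑(1 : Equiv.Perm (Fin n)) = id := rfl
  simp [this, g_one, kone_smul]

-- E4
lemma oG_mul (w w' : Equiv.Perm (Fin n)) : (oG w : EE n M) * oG w' = oG (w * w') := by
  refine TensorProduct.ext' fun f m => ?_
  simp only [Module.End.mul_apply, oG_tmul, ← kmul_smul, g_mul, rename_rename]
  rfl

-- E5
lemma oG_oC (w : Equiv.Perm (Fin n)) (i : Fin n) :
    (oG w : EE n M) * oC i = oC (w i) * oG w := by
  refine TensorProduct.ext' fun f m => ?_
  simp only [Module.End.mul_apply, oG_tmul, oC_tmul, ← kmul_smul, g_c]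

-- E6
lemma oG_oY (w : Equiv.Perm (Fin n)) (i : Fin n) :
    (oG w : EE n M) * oY i = oY (w i) * oG w := by
  refine TensorProduct.ext' fun f m => ?_
  simp only [Module.End.mul_apply, oG_tmul, oY_tmul, map_mul, rename_X]

-- E8
lemma oY_comm (i j : Fin n) : (oY i : EE n M) * oY j = oY j * oY i := by
  refine TensorProduct.ext' fun f m => ?_
  simp only [Module.End.mul_apply, oY_tmul]
  rw [← mul_assoc, mul_comm (X i) (X j), mul_assoc]

-- E9
lemma oY_oC (i j : Fin n) : (oY i : EE n M) * oC j = oC j * oY i := by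
  refine TensorProduct.ext' fun f m => ?_
  simp only [Module.End.mul_apply, oY_tmul, oC_tmul]

end Operators
end DunklAux
namespace DunklAux
open MvPolynomial
open scoped TensorProduct

section Operators2
set_option linter.unusedSectionVars false

variable {n : ℕ} (u : ℂ) {M : Type} [AddCommGroup M] [Module ℂ M]
  [Module (K n) M] [IsScalarTower ℂ (K n) M]

-- E10
lemma oX_oC_i (i : Fin n) : (oX u i : EE n M) * oC i = -(oC i * oX u i) := by
  refine TensorProduct.ext' fun f m => ?_
  simp only [Module.End.mul_apply, LinearMap.neg_apply, oC_tmul, oX_tmul u, map_smul, map_sum,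
    oC_tmul]
  refine eq_neg_of_add_eq_zero_left ?_
  rw [← smul_add, ← Finset.sum_add_distrib]
  rw [Finset.sum_eq_zero, smul_zero]
  intro k _
  by_cases hk : k = i
  · subst hk; simp [delta_self]
  · rw [← kmul_smul, ← kmul_smul, tk_c_i hk, kneg_smul, TensorProduct.tmul_neg]
    exact neg_add_cancel _

-- E11
lemma oX_oC_ne {i j : Fin n} (h : j ≠ i) : (oX u i : EE n M) * oC j = oC j * oX u i := by
  refine TensorProduct.ext' fun f m => ?_
  simp only [Module.End.mul_apply, oC_tmul, oX_tmul u, map_smul, map_sum, oC_tmul]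
  refine congrArg (u • ·) (Finset.sum_congr rfl fun k _ => ?_)
  by_cases hk : k = i
  · subst hk; simp [delta_self]
  · by_cases hkj : k = j
    · subst hkj; rw [← kmul_smul, ← kmul_smul, tk_c_k hk]
    · rw [← kmul_smul, ← kmul_smul, tk_c_other (Ne.symm hkj) h]

-- E7
lemma oG_oX (w : Equiv.Perm (Fin n)) (i : Fin n) :
    (oG w : EE n M) * oX u i = oX u (w i) * oG w := by
  refine TensorProduct.ext' fun f m => ?_
  simp only [Module.End.mul_apply, oG_tmul, oX_tmul u, map_smul, map_sum, oG_tmul]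
  refine congrArg (u • ·) ?_
  rw [← Equiv.sum_comp w
    (fun l => delta l (w i) (rename (⇑w) f) ⊗ₜ[ℂ] (tk l (w i) • (g w • m)))]
  refine Finset.sum_congr rfl fun k _ => ?_
  by_cases hk : k = i
  · subst hk; simp [delta_self]
  · rw [delta_rename hk w f, ← kmul_smul, ← kmul_smul, g_tk]

/-- The image of `RA` as an operator. -/
def oR (j i : Fin n) : EE n M :=
  if j = i then -(u • ∑ k ∈ Finset.univ.erase i, oS k i) else u • oS j i

lemma sum_ite_erase {β : Type} [AddCommGroup β] (j : Fin n) (A : Fin n → β) :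
    (∑ k : Fin n, if k = j then 0 else A k) = ∑ k ∈ Finset.univ.erase j, A k := by
  rw [← Finset.sum_erase (s := Finset.univ)
    (f := fun k => if k = j then (0 : β) else A k)
    (show (if j = j then (0 : β) else A j) = 0 by simp)]
  exact Finset.sum_congr rfl fun k hk => if_neg (Finset.ne_of_mem_erase hk)

-- E12
lemma oY_oX (j i : Fin n) :
    (oY j : EE n M) * oX u i = oX u i * oY j + oR u j i := by
  refine TensorProduct.ext' fun f m => ?_
  have hL : (oY j * oX u i : EE n M) (f ⊗ₜ[ℂ] m)
      = u • ∑ k : Fin n, (X j * delta k i f) ⊗ₜ[ℂ] (tk k i • m) := by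
    simp only [Module.End.mul_apply, oX_tmul u, map_smul, map_sum, oY_tmul]
  have hR1 : (oX u i * oY j : EE n M) (f ⊗ₜ[ℂ] m)
      = u • ∑ k : Fin n, (delta k i (X j * f)) ⊗ₜ[ℂ] (tk k i • m) := by
    simp only [Module.End.mul_apply, oY_tmul, oX_tmul u]
  rcases eq_or_ne j i with rfl | hji
  · have hoR : (oR u j j : EE n M) (f ⊗ₜ[ℂ] m)
        = -(u • ∑ k ∈ Finset.univ.erase j,
            (rename (⇑(Equiv.swap k j)) f) ⊗ₜ[ℂ] (tk k j • m)) := by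
      simp only [oR, eq_self_iff_true, if_true, LinearMap.neg_apply, LinearMap.smul_apply,
        LinearMap.sum_apply, oS_tmul]
    have hsum : (∑ k : Fin n, (delta k j (X j * f)) ⊗ₜ[ℂ] (tk k j • m))
        = (∑ k : Fin n, (X j * delta k j f) ⊗ₜ[ℂ] (tk k j • m))
          + ∑ k ∈ Finset.univ.erase j,
              (rename (⇑(Equiv.swap k j)) f) ⊗ₜ[ℂ] (tk k j • m) := by
      rw [← sum_ite_erase j, ← Finset.sum_add_distrib]
      refine Finset.sum_congr rfl fun k _ => ?_
      by_cases hk : k = j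
      · subst hk; simp [delta_self]
      · rw [if_neg hk, delta_X_mul_i hk, TensorProduct.add_tmul]
    rw [LinearMap.add_apply, hL, hR1, hoR, hsum, smul_add, add_assoc, add_neg_cancel, add_zero]
  · have hoR : (oR u j i : EE n M) (f ⊗ₜ[ℂ] m)
        = u • ((rename (⇑(Equiv.swap j i)) f) ⊗ₜ[ℂ] (tk j i • m)) := by
      simp only [oR, if_neg hji, LinearMap.smul_apply, oS_tmul]
    have hsum : (∑ k : Fin n, (delta k i (X j * f)) ⊗ₜ[ℂ] (tk k i • m))
          + (rename (⇑(Equiv.swap j i)) f) ⊗ₜ[ℂ] (tk j i • m)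
        = ∑ k : Fin n, (X j * delta k i f) ⊗ₜ[ℂ] (tk k i • m) := by
      have hsplit : (∑ k : Fin n, (X j * delta k i f) ⊗ₜ[ℂ] (tk k i • m))
          = (∑ k : Fin n, (delta k i (X j * f)) ⊗ₜ[ℂ] (tk k i • m))
            + ∑ k : Fin n, (if k = j then
                (rename (⇑(Equiv.swap j i)) f) ⊗ₜ[ℂ] (tk j i • m) else 0) := by
        rw [← Finset.sum_add_distrib]
        refine Finset.sum_congr rfl fun k _ => ?_
        by_cases hkj : k = j
        · subst hkj
          rw [if_pos rfl, delta_X_mul_k hji, TensorProduct.sub_tmul]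
          rw [sub_add_cancel]
        · rw [if_neg hkj, add_zero]
          by_cases hki : k = i
          · subst hki; simp [delta_self]
          · rw [delta_X_mul_of_ne hki (Ne.symm hkj) hji]
      rw [hsplit]
      congr 1
      simp
    rw [LinearMap.add_apply, hL, hR1, hoR, ← smul_add, hsum]

end Operators2
end DunklAux
namespace DunklAux
open MvPolynomial
open scoped TensorProduct

lemma ringcomm {R : Type} [Ring R] (A B G X : R) (hG : G * X = X * G)
    (hA : A * X = X * A) (hB : B * X = X * B) :
    ((1 + A * B) * G) * X = X * ((1 + A * B) * G) := by
  have hA' : ∀ t, A * (X * t) = X * (A * t) := fun t => by rw [← mul_assoc, hA, mul_assoc]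
  have hB' : ∀ t, B * (X * t) = X * (B * t) := fun t => by rw [← mul_assoc, hB, mul_assoc]
  simp only [add_mul, one_mul, mul_add, mul_assoc, hG, hA', hB']

lemma ringkey {R : Type} [Ring R] (Xi Xj Ci Cj G : R)
    (hGj : G * Xj = Xi * G) (hGi : G * Xi = Xj * G)
    (hCiXi : Ci * Xi = -(Xi * Ci)) (hCjXj : Cj * Xj = -(Xj * Cj))
    (hCjXi : Cj * Xi = Xi * Cj) (hCiXj : Ci * Xj = Xj * Ci)
    (hanti : Ci * Cj = -(Cj * Ci)) :
    ((1 + Cj * Ci) * G) * Xj + ((1 + Ci * Cj) * G) * Xi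
      = Xj * ((1 + Cj * Ci) * G) + Xi * ((1 + Ci * Cj) * G) := by
  have A1 : ∀ t, Ci * (Xi * t) = -(Xi * (Ci * t)) := fun t => by
    rw [← mul_assoc, hCiXi, neg_mul, mul_assoc]
  have A2 : ∀ t, Cj * (Xj * t) = -(Xj * (Cj * t)) := fun t => by
    rw [← mul_assoc, hCjXj, neg_mul, mul_assoc]
  have A3 : ∀ t, Cj * (Xi * t) = Xi * (Cj * t) := fun t => by
    rw [← mul_assoc, hCjXi, mul_assoc]
  have A4 : ∀ t, Ci * (Xj * t) = Xj * (Ci * t) := fun t => by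
    rw [← mul_assoc, hCiXj, mul_assoc]
  have A5 : ∀ t, Ci * (Cj * t) = -(Cj * (Ci * t)) := fun t => by
    rw [← mul_assoc, hanti, neg_mul, mul_assoc]
  simp only [add_mul, one_mul, mul_add, mul_one, mul_assoc, hGj, hGi, A1, A2, A3, A4, A5,
    mul_neg, neg_mul, neg_neg]
  abel

section Operators3
set_option linter.unusedSectionVars false

variable {n : ℕ} (u : ℂ) {M : Type} [AddCommGroup M] [Module ℂ M]
  [Module (K n) M] [IsScalarTower ℂ (K n) M]

lemma oS_oX_comm {k i j : Fin n} (hjk : j ≠ k) (hji : j ≠ i) :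
    (oS k i : EE n M) * oX u j = oX u j * oS k i := by
  have hg : (oG (Equiv.swap k i) : EE n M) * oX u j = oX u j * oG (Equiv.swap k i) := by
    have h := oG_oX u (M := M) (Equiv.swap k i) j
    rwa [Equiv.swap_apply_of_ne_of_ne hjk hji] at h
  exact ringcomm (oC k) (oC i) (oG (Equiv.swap k i)) (oX u j) hg
    (oX_oC_ne u (Ne.symm hjk)).symm (oX_oC_ne u (Ne.symm hji)).symm

lemma keyxx {i j : Fin n} (h : i ≠ j) :
    (oS j i : EE n M) * oX u j + oS i j * oX u i
      = oX u j * oS j i + oX u i * oS i j := by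
  have hswap : Equiv.swap i j = Equiv.swap j i := Equiv.swap_comm i j
  have hGj : (oG (Equiv.swap j i) : EE n M) * oX u j = oX u i * oG (Equiv.swap j i) := by
    have hh := oG_oX u (M := M) (Equiv.swap j i) j
    rwa [Equiv.swap_apply_left] at hh
  have hGi : (oG (Equiv.swap j i) : EE n M) * oX u i = oX u j * oG (Equiv.swap j i) := by
    have hh := oG_oX u (M := M) (Equiv.swap j i) i
    rwa [Equiv.swap_apply_right] at hh
  have hCiXi : (oC i : EE n M) * oX u i = -(oX u i * oC i) := by
    rw [oX_oC_i u i, eneg_neg]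
  have hCjXj : (oC j : EE n M) * oX u j = -(oX u j * oC j) := by
    rw [oX_oC_i u j, eneg_neg]
  have hCjXi : (oC j : EE n M) * oX u i = oX u i * oC j :=
    (oX_oC_ne u (Ne.symm h)).symm
  have hCiXj : (oC i : EE n M) * oX u j = oX u j * oC i :=
    (oX_oC_ne u h).symm
  have hanti : (oC i : EE n M) * oC j = -(oC j * oC i) := oC_anti h
  show ((1 + oC j * oC i) * oG (Equiv.swap j i) : EE n M) * oX u j
      + ((1 + oC i * oC j) * oG (Equiv.swap i j)) * oX u i
      = oX u j * ((1 + oC j * oC i) * oG (Equiv.swap j i))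
      + oX u i * ((1 + oC i * oC j) * oG (Equiv.swap i j))
  rw [hswap]
  exact ringkey (oX u i) (oX u j) (oC i) (oC j) (oG (Equiv.swap j i))
    hGj hGi hCiXi hCjXj hCjXi hCiXj hanti

lemma dag1 {i j : Fin n} (hij : i ≠ j) :
    (oX u i : EE n M) * oR u i j + oR u i i * oX u j
      = oX u j * oR u i i + oR u i j * oX u i := by
  have hji : j ≠ i := Ne.symm hij
  have hjmem : j ∈ Finset.univ.erase i := Finset.mem_erase.mpr ⟨hji, Finset.mem_univ j⟩
  simp only [oR, if_neg hij, eq_self_iff_true, if_true]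
  simp only [eneg_mul, emul_neg, smul_mul_assoc, mul_smul_comm, Finset.sum_mul, Finset.mul_sum]
  have hs1 : (∑ k ∈ Finset.univ.erase i, (oS k i : EE n M) * oX u j)
      = (∑ k ∈ (Finset.univ.erase i).erase j, oX u j * oS k i) + oS j i * oX u j := by
    rw [← Finset.sum_erase_add (Finset.univ.erase i) _ hjmem]
    congr 1
    refine Finset.sum_congr rfl fun k hk => ?_
    have hk1 : k ≠ j := (Finset.mem_erase.mp hk).1
    have hk2 : k ≠ i := (Finset.mem_erase.mp (Finset.mem_erase.mp hk).2).1
    exact oS_oX_comm u (Ne.symm hk1) hji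
  have hs2 : (∑ k ∈ Finset.univ.erase i, (oX u j : EE n M) * oS k i)
      = (∑ k ∈ (Finset.univ.erase i).erase j, oX u j * oS k i) + oX u j * oS j i :=
    (Finset.sum_erase_add _ _ hjmem).symm
  rw [hs1, hs2]
  simp only [smul_add]
  have hkey := congrArg (fun z : EE n M => u • z) (keyxx u (M := M) hij)
  simp only [smul_add] at hkey
  have hr : u • ((oS i j : EE n M) * oX u i)
      = (u • (oX u j * oS j i) + u • (oX u i * oS i j)) - u • (oS j i * oX u j) :=
    by rw [← hkey]; abel
  rw [hr]
  abel

lemma dag {i j : Fin n} (hij : i ≠ j) (l : Fin n) :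
    (oX u i : EE n M) * oR u l j + oR u l i * oX u j
      = oX u j * oR u l i + oR u l j * oX u i := by
  by_cases hli : l = i
  · subst hli; exact dag1 u hij
  by_cases hlj : l = j
  · subst hlj; exact (dag1 u (Ne.symm hij)).symm
  · simp only [oR, if_neg hli, if_neg hlj]
    simp only [smul_mul_assoc, mul_smul_comm]
    rw [oS_oX_comm u (Ne.symm hlj) (Ne.symm hij), oS_oX_comm u (Ne.symm hli) hij]
    abel

-- E13
lemma oX_comm (i j : Fin n) : (oX u i : EE n M) * oX u j = oX u j * oX u i := by
  rcases eq_or_ne i j with rfl | hij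
  · rfl
  have expand : ∀ l a b : Fin n, (oY l : EE n M) * (oX u a * oX u b)
      = (oX u a * oX u b) * oY l + (oX u a * oR u l b + oR u l a * oX u b) := by
    intro l a b
    rw [← mul_assoc, oY_oX u l a, add_mul, mul_assoc, oY_oX u l b, mul_add, ← mul_assoc,
      add_assoc]
  have commB : ∀ l : Fin n, (oY l : EE n M) * (oX u i * oX u j - oX u j * oX u i)
      = (oX u i * oX u j - oX u j * oX u i) * oY l := by
    intro l
    rw [emul_sub, esub_mul, expand l i j, expand l j i, dag u hij l]
    abel
  rw [← sub_eq_zero]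
  have key : ∀ (f : P n) (m : M),
      ((oX u i * oX u j - oX u j * oX u i : EE n M)) (f ⊗ₜ[ℂ] m) = 0 := by
    intro f
    induction f using MvPolynomial.induction_on with
    | C a =>
      intro m
      have hzi : (oX u j : EE n M) ((C a : P n) ⊗ₜ[ℂ] m) = 0 := by
        rw [oX_tmul u]
        simp [delta_C]
      have hzj : (oX u i : EE n M) ((C a : P n) ⊗ₜ[ℂ] m) = 0 := by
        rw [oX_tmul u]
        simp [delta_C]
      rw [LinearMap.sub_apply, Module.End.mul_apply, Module.End.mul_apply, hzi, hzj,
        map_zero, map_zero, sub_zero]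
    | add p q hp hq =>
      intro m
      rw [TensorProduct.add_tmul, map_add, hp m, hq m, add_zero]
    | mul_X p l hp =>
      intro m
      have h1 : (p * X l) ⊗ₜ[ℂ] m = (oY l : EE n M) (p ⊗ₜ[ℂ] m) := by
        rw [oY_tmul, mul_comm]
      rw [h1, ← Module.End.mul_apply, ← commB l, Module.End.mul_apply, hp m, map_zero]
  refine TensorProduct.ext' fun f m => ?_
  rw [key f m, LinearMap.zero_apply]

end Operators3
end DunklAux
namespace DunklAux
open MvPolynomial
open scoped TensorProduct

section Rho
set_option linter.unusedSectionVars false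

variable {n : ℕ} (u : ℂ) {M : Type} [AddCommGroup M] [Module ℂ M]
  [Module (K n) M] [IsScalarTower ℂ (K n) M]

def genMap : HGen n (Equiv.Perm (Fin n)) → EE n M
  | .x i => oX u i
  | .y i => oY i
  | .c i => oC i
  | .g w => oG w

def rho0 : HF n (Equiv.Perm (Fin n)) →ₐ[ℂ] EE n M :=
  FreeAlgebra.lift ℂ (genMap u)

@[simp] lemma rho0_hX (i : Fin n) : (rho0 u : HF n (Equiv.Perm (Fin n)) →ₐ[ℂ] EE n M) (hX i) = oX u i := by
  simp [rho0, hX, genMap]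
@[simp] lemma rho0_hY (i : Fin n) : (rho0 u : HF n (Equiv.Perm (Fin n)) →ₐ[ℂ] EE n M) (hY i) = oY i := by
  simp [rho0, hY, genMap]
@[simp] lemma rho0_hC (i : Fin n) : (rho0 u : HF n (Equiv.Perm (Fin n)) →ₐ[ℂ] EE n M) (hC i) = oC i := by
  simp [rho0, hC, genMap]
@[simp] lemma rho0_hG (w : Equiv.Perm (Fin n)) :
    (rho0 u : HF n (Equiv.Perm (Fin n)) →ₐ[ℂ] EE n M) (hG w) = oG w := by
  simp [rho0, hG, genMap]

lemma rho0_RA (j i : Fin n) :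
    (rho0 u : HF n (Equiv.Perm (Fin n)) →ₐ[ℂ] EE n M) (RA n u j i) = oR u j i := by
  rcases eq_or_ne j i with rfl | hji
  · simp only [RA, oR, eq_self_iff_true, if_true, map_neg, map_smul, map_sum, map_mul,
      map_add, map_one, rho0_hC, rho0_hG, oS]
  · simp only [RA, if_neg hji, oR, map_smul, map_mul, map_add, map_one,
      rho0_hC, rho0_hG, oS]

lemma rho0_rel : ∀ ⦃x y : HF n (Equiv.Perm (Fin n))⦄,
    HRel n (Equiv.Perm (Fin n)) (actA n) (RA n u) x y →
    (rho0 u : HF n (Equiv.Perm (Fin n)) →ₐ[ℂ] EE n M) x = rho0 u y := by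
  intro x y h
  induction h with
  | cc i => simp only [map_mul, map_one, rho0_hC]; exact oC_sq i
  | canti h => simp only [map_mul, map_neg, rho0_hC]; exact oC_anti h
  | xx i j => simp only [map_mul, rho0_hX]; exact oX_comm u i j
  | yy i j => simp only [map_mul, rho0_hY]; exact oY_comm i j
  | yc i j => simp only [map_mul, rho0_hY, rho0_hC]; exact oY_oC i j
  | xcs i => simp only [map_mul, map_neg, rho0_hX, rho0_hC]; exact oX_oC_i u i
  | xc h => simp only [map_mul, rho0_hX, rho0_hC]; exact oX_oC_ne u (Ne.symm h)
  | gone => simp only [map_one, rho0_hG]; exact oG_one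
  | gmul w w' => simp only [map_mul, rho0_hG]; exact oG_mul w w'
  | gx w i =>
    simp only [map_mul, map_smul, rho0_hG, rho0_hX, actA, one_smul]
    exact oG_oX u w i
  | gy w i =>
    simp only [map_mul, map_smul, rho0_hG, rho0_hY, actA, one_smul]
    exact oG_oY w i
  | gc w i =>
    simp only [map_mul, map_smul, rho0_hG, rho0_hC, actA, one_smul]
    exact oG_oC w i
  | yx j i =>
    simp only [map_mul, map_add, rho0_hY, rho0_hX, rho0_RA]
    exact oY_oX u j i

def rho : HCA n u →ₐ[ℂ] EE n M :=
  RingQuot.liftAlgHom ℂ ⟨rho0 u, rho0_rel u⟩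

lemma rho_xA (i : Fin n) : (rho u : HCA n u →ₐ[ℂ] EE n M) (xA i) = oX u i := by
  have h : (rho u : HCA n u →ₐ[ℂ] EE n M) (xA i) = rho0 u (hX i) :=
    RingQuot.liftAlgHom_mkAlgHom_apply ℂ (rho0 u) (rho0_rel u) (hX i)
  rw [h, rho0_hX]

lemma rho_yA (i : Fin n) : (rho u : HCA n u →ₐ[ℂ] EE n M) (yA i) = oY i := by
  have h : (rho u : HCA n u →ₐ[ℂ] EE n M) (yA i) = rho0 u (hY i) :=
    RingQuot.liftAlgHom_mkAlgHom_apply ℂ (rho0 u) (rho0_rel u) (hY i)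
  rw [h, rho0_hY]

lemma rho_cA (i : Fin n) : (rho u : HCA n u →ₐ[ℂ] EE n M) (cA i) = oC i := by
  have h : (rho u : HCA n u →ₐ[ℂ] EE n M) (cA i) = rho0 u (hC i) :=
    RingQuot.liftAlgHom_mkAlgHom_apply ℂ (rho0 u) (rho0_rel u) (hC i)
  rw [h, rho0_hC]

lemma rho_gA (w : Equiv.Perm (Fin n)) : (rho u : HCA n u →ₐ[ℂ] EE n M) (gA w) = oG w := by
  have h : (rho u : HCA n u →ₐ[ℂ] EE n M) (gA w) = rho0 u (hG w) :=
    RingQuot.liftAlgHom_mkAlgHom_apply ℂ (rho0 u) (rho0_rel u) (hG w)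
  rw [h, rho0_hG]

end Rho
end DunklAux

/-- **Dunkl operator representation of `H^c_{A_{n-1}}(u)` on `ℂ[y] ⊗ M`**
(Khongsap-Wang, Theorem 3.7).  For `M` a module over `C_n ⋊ ℂS_n`, the operators:
`y_i` = multiplication by `y_i`, `w·(f ⊗ m) = f^w ⊗ wm`, `c_i·(f ⊗ m) = f ⊗ c_i m`, and
`x_i` = the Dunkl operator `x_i·(f ⊗ m) = u Σ_{k≠i} ((f - f^{s_{ki}})/(y_i - y_k)) ⊗ (1 + c_k c_i)s_{ki} m`
define a representation of `H^c_{A_{n-1}}(u)`. -/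
theorem dunkl_representation_x_A (n : ℕ) (u : ℂ) (M : Type) [AddCommGroup M] [Module ℂ M]
    [Module (Smash n (Equiv.Perm (Fin n)) (actA n)) M]
    [IsScalarTower ℂ (Smash n (Equiv.Perm (Fin n)) (actA n)) M] :
    (∀ (f : MvPolynomial (Fin n) ℂ) (i k : Fin n), k ≠ i →
      ∃! g : MvPolynomial (Fin n) ℂ,
        (MvPolynomial.X i - MvPolynomial.X k) * g
          = f - MvPolynomial.rename (Equiv.swap k i) f) ∧
    ∃ ρ : HCA n u →ₐ[ℂ] Module.End ℂ (MvPolynomial (Fin n) ℂ ⊗[ℂ] M),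
      (∀ (i : Fin n) (f : MvPolynomial (Fin n) ℂ) (m : M),
        ρ (yA i) (f ⊗ₜ[ℂ] m) = (MvPolynomial.X i * f) ⊗ₜ[ℂ] m) ∧
      (∀ (w : Equiv.Perm (Fin n)) (f : MvPolynomial (Fin n) ℂ) (m : M),
        ρ (gA w) (f ⊗ₜ[ℂ] m)
          = (MvPolynomial.rename w f) ⊗ₜ[ℂ] ((kG (actA n) w) • m)) ∧
      (∀ (i : Fin n) (f : MvPolynomial (Fin n) ℂ) (m : M),
        ρ (cA i) (f ⊗ₜ[ℂ] m) = f ⊗ₜ[ℂ] ((kC (actA n) i) • m)) ∧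
      (∀ (i : Fin n) (f : MvPolynomial (Fin n) ℂ) (g : Fin n → MvPolynomial (Fin n) ℂ)
          (m : M),
        (∀ k, k ≠ i → (MvPolynomial.X i - MvPolynomial.X k) * g k
            = f - MvPolynomial.rename (Equiv.swap k i) f) →
        ρ (xA i) (f ⊗ₜ[ℂ] m)
          = u • ∑ k ∈ Finset.univ.erase i,
              (g k) ⊗ₜ[ℂ]
                ((((1 : Smash n (Equiv.Perm (Fin n)) (actA n))
                    + kC (actA n) k * kC (actA n) i)
                  * kG (actA n) (Equiv.swap k i)) • m)) := by
  classical
  constructor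
  · intro f i k hk
    exact DunklAux.existsUnique_delta f i k hk
  · refine ⟨DunklAux.rho u, ?_, ?_, ?_, ?_⟩
    · intro i f m
      rw [DunklAux.rho_yA u i]
      rfl
    · intro w f m
      rw [DunklAux.rho_gA u w]
      rfl
    · intro i f m
      rw [DunklAux.rho_cA u i]
      rfl
    · intro i f g m hg
      rw [DunklAux.rho_xA u i, DunklAux.oX_tmul u]
      rw [← Finset.sum_erase (s := Finset.univ)
        (f := fun k => DunklAux.delta k i f ⊗ₜ[ℂ] (DunklAux.tk k i • m)) (a := i)
        (show DunklAux.delta i i f ⊗ₜ[ℂ] (DunklAux.tk i i • m) = 0 by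
          rw [DunklAux.delta_self]; exact TensorProduct.zero_tmul _ _)]
      congr 1
      refine Finset.sum_congr rfl fun k hk => ?_
      have hki : k ≠ i := Finset.ne_of_mem_erase hk
      rw [← DunklAux.delta_eq hki (hg k hki)]
      rfl

end
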